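/- Let A be a unital Banach algebra with exactly one non-trivial proper closed (two-sided) ideal I. Then the Lie normalizer N(I) = {a ∈ A : ax - xa ∈ I for all x ∈ A} equals ℂ1 + I, and in particular ℂ1 + I is a closed Lie ideal of A. -/

import Mathlib

section QuotientSetup

variable {A : Type*} [NormedRing A] [NormedAlgebra ℂ A] (I : TwoSidedIdeal A)

/-- The two-sided ideal `I` as a `ℂ`-submodule. -/
def idealSubmodule : Submodule ℂ A where
  carrier := I
  add_mem' := I.add_mem
  zero_mem' := I.zero_mem
  smul_mem' := fun c x hx => by
    have : c • x = (c • (1:A)) * x := by rw [smul_mul_assoc, one_mul]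
    rw [this]; exact I.mul_mem_left _ _ hx

lemma mem_idealSubmodule {x : A} : x ∈ idealSubmodule I ↔ x ∈ I := Iff.rfl

/-- The quotient Banach algebra `A ⧸ I`. -/
abbrev QA := A ⧸ idealSubmodule I

noncomputable instance : One (QA I) := ⟨Submodule.Quotient.mk 1⟩

noncomputable instance : Mul (QA I) :=
  ⟨Quotient.map₂ (· * ·) (by
    intro a b hab c d hcd
    have hab' : a - b ∈ I := (Submodule.quotientRel_def _).1 hab
    have hcd' : c - d ∈ I := (Submodule.quotientRel_def _).1 hcd
    refine (Submodule.quotientRel_def _).2 ?_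
    have : a * c - b * d = (a - b) * c + b * (c - d) := by noncomm_ring
    rw [this]
    exact I.add_mem (I.mul_mem_right _ _ hab') (I.mul_mem_left _ _ hcd'))⟩

lemma QA.mk_mul (x y : A) :
    (Submodule.Quotient.mk (x * y) : QA I) =
      Submodule.Quotient.mk x * Submodule.Quotient.mk y := rfl

lemma QA.mk_one : (Submodule.Quotient.mk (1 : A) : QA I) = 1 := rfl

noncomputable instance : Ring (QA I) :=
  { (inferInstance : AddCommGroup (QA I)) with
    mul := (· * ·)
    one := 1
    mul_assoc := by rintro ⟨a⟩ ⟨b⟩ ⟨c⟩; exact congrArg Submodule.Quotient.mk (mul_assoc a b c)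
    one_mul := by rintro ⟨a⟩; exact congrArg Submodule.Quotient.mk (one_mul a)
    mul_one := by rintro ⟨a⟩; exact congrArg Submodule.Quotient.mk (mul_one a)
    left_distrib := by
      rintro ⟨a⟩ ⟨b⟩ ⟨c⟩; exact congrArg Submodule.Quotient.mk (left_distrib a b c)
    right_distrib := by
      rintro ⟨a⟩ ⟨b⟩ ⟨c⟩; exact congrArg Submodule.Quotient.mk (right_distrib a b c)
    zero_mul := by rintro ⟨a⟩; exact congrArg Submodule.Quotient.mk (zero_mul a)
    mul_zero := by rintro ⟨a⟩; exact congrArg Submodule.Quotient.mk (mul_zero a) }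

open Metric in
lemma QA.norm_mul (x y : QA I) : ‖x * y‖ ≤ ‖x‖ * ‖y‖ :=
  le_of_forall_pos_le_add fun ε hε => by
    have := ((nhds_basis_ball.prod_nhds nhds_basis_ball).tendsto_iff nhds_basis_ball).mp
      (continuous_mul.tendsto (‖x‖, ‖y‖)) ε hε
    simp only [Set.mem_prod, mem_ball, and_imp, Prod.forall, exists_prop, Prod.exists] at this
    rcases this with ⟨ε₁, ε₂, ⟨h₁, h₂⟩, h⟩
    obtain ⟨⟨a, rfl, ha⟩, ⟨b, rfl, hb⟩⟩ := Submodule.Quotient.norm_mk_lt x h₁,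
      Submodule.Quotient.norm_mk_lt y h₂
    simp only [dist, abs_sub_lt_iff] at h
    specialize h ‖a‖ ‖b‖ ⟨by linarith, by linarith [Submodule.Quotient.norm_mk_le (idealSubmodule I) a]⟩
      ⟨by linarith, by linarith [Submodule.Quotient.norm_mk_le (idealSubmodule I) b]⟩
    calc
      _ ≤ ‖a‖ * ‖b‖ := by
        rw [← QA.mk_mul]
        exact (Submodule.Quotient.norm_mk_le (idealSubmodule I) (a * b)).trans (norm_mul_le a b)
      _ ≤ _ := (sub_lt_iff_lt_add'.mp h.1).le

noncomputable instance : SeminormedRing (QA I) :=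
  { (inferInstance : Ring (QA I)), (inferInstance : SeminormedAddCommGroup (QA I)) with
    norm_mul_le := QA.norm_mul I }

noncomputable instance [IsClosed ((idealSubmodule I : Submodule ℂ A) : Set A)] :
    NormedRing (QA I) :=
  { (inferInstance : NormedAddCommGroup (QA I)), (inferInstance : SeminormedRing (QA I)) with }

noncomputable instance : Algebra ℂ (QA I) :=
  Algebra.ofModule
    (by rintro r ⟨a⟩ ⟨b⟩
        show Submodule.Quotient.mk ((r • a) * b) = Submodule.Quotient.mk (r • (a * b))
        rw [smul_mul_assoc])
    (by rintro r ⟨a⟩ ⟨b⟩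
        show Submodule.Quotient.mk (a * (r • b)) = Submodule.Quotient.mk (r • (a * b))
        rw [mul_smul_comm])

noncomputable instance : NormedAlgebra ℂ (QA I) :=
  { (inferInstance : Algebra ℂ (QA I)) with
    norm_smul_le := norm_smul_le }

/-- The quotient map as a ring homomorphism. -/
noncomputable def QA.pi : A →+* QA I where
  toFun := Submodule.Quotient.mk
  map_one' := rfl
  map_mul' := fun _ _ => rfl
  map_zero' := rfl
  map_add' := fun _ _ => rfl

lemma QA.pi_eq_zero {x : A} : QA.pi I x = 0 ↔ x ∈ I :=
  Submodule.Quotient.mk_eq_zero _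

lemma QA.pi_smul (c : ℂ) (x : A) : QA.pi I (c • x) = c • QA.pi I x :=
  Submodule.Quotient.mk_smul _ c x

end QuotientSetup

/-- If a unital Banach algebra `A` has exactly one non-trivial proper closed
two-sided ideal `I`, then the Lie normalizer `N(I)` equals `ℂ1 + I`, and `ℂ1 + I` is a
closed Lie ideal of `A`. -/
theorem lieNormalizer_of_unique_closed_ideal
    (A : Type*) [NormedRing A] [NormedAlgebra ℂ A] [CompleteSpace A]
    (I : TwoSidedIdeal A) (hcl : IsClosed (I : Set A)) (hbot : I ≠ ⊥) (htop : I ≠ ⊤)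
    (huniq : ∀ J : TwoSidedIdeal A, IsClosed (J : Set A) → J ≠ ⊥ → J ≠ ⊤ → J = I) :
    {a : A | ∀ x : A, a * x - x * a ∈ I} =
        {a : A | ∃ (c : ℂ) (z : A), z ∈ I ∧ a = c • (1 : A) + z} ∧
      IsClosed {a : A | ∃ (c : ℂ) (z : A), z ∈ I ∧ a = c • (1 : A) + z} ∧
      ∀ a ∈ {a : A | ∃ (c : ℂ) (z : A), z ∈ I ∧ a = c • (1 : A) + z}, ∀ x : A,
        a * x - x * a ∈ {a : A | ∃ (c : ℂ) (z : A), z ∈ I ∧ a = c • (1 : A) + z} := by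
  haveI hscl : IsClosed ((idealSubmodule I : Submodule ℂ A) : Set A) := hcl
  -- `1 ∉ I`
  have hone : (1 : A) ∉ I := by
    intro h1
    exact htop (SetLike.ext fun x => ⟨fun _ => trivial, fun _ => by
      simpa using I.mul_mem_left x 1 h1⟩)
  haveI : Nontrivial (QA I) := by
    refine ⟨⟨1, 0, fun h => hone ?_⟩⟩
    rw [← QA.mk_one I] at h
    exact (Submodule.Quotient.mk_eq_zero _).1 h
  -- the easy inclusion / Lie ideal part
  have easy : ∀ c : ℂ, ∀ z ∈ I, ∀ x : A,
      (c • (1 : A) + z) * x - x * (c • (1 : A) + z) = z * x - x * z := by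
    intro c z hz x
    have h1 : (c • (1 : A)) * x = c • x := by rw [smul_mul_assoc, one_mul]
    have h2 : x * (c • (1 : A)) = c • x := by rw [mul_smul_comm, mul_one]
    rw [add_mul, mul_add, h1, h2]
    abel
  -- main (hard) inclusion
  have main : ∀ a : A, (∀ x : A, a * x - x * a ∈ I) →
      ∃ (c : ℂ) (z : A), z ∈ I ∧ a = c • (1 : A) + z := by
    intro a ha
    obtain ⟨lam, hlam⟩ := spectrum.nonempty (QA.pi I a)
    rw [spectrum.mem_iff] at hlam
    set b := a - lam • (1 : A) with hb
    -- b commutes with everything mod I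
    have hcomm : ∀ y : A, b * y - y * b ∈ I := by
      intro y
      have h1 : (lam • (1 : A)) * y = lam • y := by rw [smul_mul_assoc, one_mul]
      have h2 : y * (lam • (1 : A)) = lam • y := by rw [mul_smul_comm, mul_one]
      have : b * y - y * b = a * y - y * a := by
        rw [hb, sub_mul, mul_sub, h1, h2]; abel
      rw [this]; exact ha y
    -- it suffices to show `b ∈ I`
    suffices hbI : b ∈ I by
      exact ⟨lam, b, hbI, by rw [hb]; abel⟩
    by_contra hbI
    -- the two-sided ideal generated by `b` and `I`
    set T : Set A := {y : A | ∃ x z : A, z ∈ I ∧ y = b * x + z} with hT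
    have hTzero : (0 : A) ∈ T := ⟨0, 0, I.zero_mem, by simp⟩
    have hTadd : ∀ {u v : A}, u ∈ T → v ∈ T → u + v ∈ T := by
      rintro u v ⟨x1, z1, hz1, rfl⟩ ⟨x2, z2, hz2, rfl⟩
      exact ⟨x1 + x2, z1 + z2, I.add_mem hz1 hz2, by noncomm_ring⟩
    have hTneg : ∀ {u : A}, u ∈ T → -u ∈ T := by
      rintro u ⟨x, z, hz, rfl⟩
      exact ⟨-x, -z, I.neg_mem hz, by noncomm_ring⟩
    have hTmulL : ∀ {y u : A}, u ∈ T → y * u ∈ T := by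
      rintro y u ⟨x, z, hz, rfl⟩
      have hyb : y * b - b * y ∈ I := by
        have := I.neg_mem (hcomm y); simpa [neg_sub] using this
      exact ⟨y * x, (y * b - b * y) * x + y * z,
        I.add_mem (I.mul_mem_right _ _ hyb) (I.mul_mem_left _ _ hz), by noncomm_ring⟩
    have hTmulR : ∀ {u y : A}, u ∈ T → u * y ∈ T := by
      rintro u y ⟨x, z, hz, rfl⟩
      exact ⟨x * y, z * y, I.mul_mem_right _ _ hz, by noncomm_ring⟩
    have hTsmul : ∀ (c : ℂ) {u : A}, u ∈ T → c • u ∈ T := by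
      rintro c u ⟨x, z, hz, rfl⟩
      refine ⟨c • x, c • z, (idealSubmodule I).smul_mem c hz, ?_⟩
      rw [smul_add, mul_smul_comm]
    -- the closure of `T` as a two-sided ideal
    set J : TwoSidedIdeal A := TwoSidedIdeal.mk' (closure T)
      (subset_closure hTzero)
      (fun {u v} hu hv => map_mem_closure₂ continuous_add hu hv
        (fun a ha b hb => hTadd ha hb))
      (fun {u} hu => map_mem_closure continuous_neg hu (fun v hv => hTneg hv))
      (fun {x y} hy => map_mem_closure (continuous_mul_left x) hy (fun v hv => hTmulL hv))
      (fun {x y} hx => map_mem_closure (f := fun v => v * y) (continuous_mul_right y) hx (fun v hv => hTmulR hv))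
      with hJ
    have hmemJ : ∀ {x : A}, x ∈ J ↔ x ∈ closure T := by
      intro x
      rw [hJ, TwoSidedIdeal.mem_mk']
    have hIJ : ∀ {z : A}, z ∈ I → z ∈ J := by
      intro z hz
      exact hmemJ.2 (subset_closure ⟨0, z, hz, by simp⟩)
    have hJcl : IsClosed (J : Set A) := by
      have : (J : Set A) = closure T := Set.ext fun x => hmemJ
      rw [this]; exact isClosed_closure
    have hJbot : J ≠ ⊥ := by
      intro hJbot
      apply hbot
      refine SetLike.ext fun x => ⟨fun hx => ?_, fun hx => ?_⟩
      · have : x ∈ (⊥ : TwoSidedIdeal A) := hJbot ▸ hIJ hx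
        rw [TwoSidedIdeal.mem_bot] at this
        rw [this]; exact TwoSidedIdeal.zero_mem ⊥
      · rw [TwoSidedIdeal.mem_bot] at hx
        rw [hx]; exact I.zero_mem
    by_cases hJtop : J = ⊤
    · -- `1 ∈ closure T`, so some element of `T` is a unit; conclude `π b` is a unit
      have h1J : (1 : A) ∈ closure T := by
        rw [← hmemJ, hJtop]; trivial
      obtain ⟨t, htT, htclose⟩ := Metric.mem_closure_iff.1 h1J 1 one_pos
      rw [dist_eq_norm] at htclose
      have hu : IsUnit t := by
        have := (Units.oneSub (1 - t) htclose).isUnit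
        simpa using this
      obtain ⟨x, z, hz, rfl⟩ := htT
      set π : A →+* QA I := QA.pi I with hπ
      have hπz : π z = 0 := (QA.pi_eq_zero I).2 hz
      have hπt' : IsUnit (π b * π x) := by
        have := hu.map π
        rwa [map_add, hπz, add_zero, map_mul] at this
      -- `π b` is central
      have hcentral : ∀ q : QA I, π b * q = q * π b := by
        intro q
        obtain ⟨y, rfl⟩ := Submodule.Quotient.mk_surjective _ q
        show π b * π y = π y * π b
        have h0 : π (b * y) = π (y * b) := by
          have h1 := (QA.pi_eq_zero I).2 (hcomm y)
          rw [map_sub] at h1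
          exact sub_eq_zero.mp h1
        rw [← map_mul, ← map_mul, h0]
      obtain ⟨uu, huu⟩ := hπt'
      have h1 : π b * (π x * ↑uu⁻¹) = 1 := by
        rw [← mul_assoc, ← huu, Units.mul_inv]
      have h2 : (π x * ↑uu⁻¹) * π b = 1 := by
        rw [← hcentral, h1]
      have hbu : IsUnit (π b) := ⟨⟨π b, π x * ↑uu⁻¹, h1, h2⟩, rfl⟩
      exfalso
      apply hlam
      have hπb : π b = π a - algebraMap ℂ (QA I) lam := by
        have h1 : π (lam • (1:A)) = algebraMap ℂ (QA I) lam := by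
          rw [hπ, QA.pi_smul, map_one, Algebra.algebraMap_eq_smul_one]
        rw [hb, map_sub, h1]
      have heq2 : algebraMap ℂ (QA I) lam - π a = -(π b) := by
        rw [hπb]; abel
      rw [heq2]
      exact hbu.neg
    · -- otherwise `J = I`, contradicting `b ∉ I`
      have hJI : J = I := huniq J hJcl hJbot hJtop
      exact hbI (by rw [← hJI]; exact hmemJ.2 (subset_closure ⟨1, 0, I.zero_mem, by simp⟩))
  refine ⟨?_, ?_, ?_⟩
  · ext a
    constructor
    · intro ha
      exact main a ha
    · rintro ⟨c, z, hz, rfl⟩ x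
      rw [easy c z hz x]
      exact I.sub_mem (I.mul_mem_right _ _ hz) (I.mul_mem_left _ _ hz)
  · -- closedness: preimage of the (closed) span of `1` in the quotient
    have heq : {a : A | ∃ (c : ℂ) (z : A), z ∈ I ∧ a = c • (1 : A) + z} =
        (idealSubmodule I).mkQ ⁻¹' (Submodule.span ℂ {(1 : QA I)} : Set (QA I)) := by
      ext a
      simp only [Set.mem_setOf_eq, Set.mem_preimage, SetLike.mem_coe,
        Submodule.mem_span_singleton]
      constructor
      · rintro ⟨c, z, hz, rfl⟩
        refine ⟨c, ?_⟩
        show c • (1 : QA I) = Submodule.Quotient.mk (c • (1:A) + z)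
        rw [← QA.mk_one I, ← Submodule.Quotient.mk_smul]
        symm
        rw [Submodule.Quotient.eq]
        simpa using (mem_idealSubmodule I).2 hz
      · rintro ⟨c, hc⟩
        refine ⟨c, a - c • (1 : A), ?_, by abel⟩
        have : ((idealSubmodule I).mkQ a : QA I) = Submodule.Quotient.mk (c • (1:A)) := by
          rw [← hc, ← QA.mk_one I, ← Submodule.Quotient.mk_smul]
        have h2 : a - c • (1:A) ∈ idealSubmodule I := by
          rw [← Submodule.Quotient.eq]
          exact this.symm ▸ rfl
        exact h2
    rw [heq]
    have hcont : Continuous (idealSubmodule I).mkQ :=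
      (LinearMap.mkContinuous ((idealSubmodule I).mkQ) 1
        (fun x => by simpa using Submodule.Quotient.norm_mk_le (idealSubmodule I) x)).continuous
    exact (Submodule.closed_of_finiteDimensional
      (Submodule.span ℂ {(1 : QA I)})).preimage hcont
  · rintro a ⟨c, z, hz, rfl⟩ x
    refine ⟨0, z * x - x * z, I.sub_mem (I.mul_mem_right _ _ hz) (I.mul_mem_left _ _ hz), ?_⟩
    rw [easy c z hz x]
    simp
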